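/- Let $\Omega \subset \mathbb{R}^{n+1}$ be open with $d$-ADR boundary and corkscrew condition, $Q_0 \in \mathbb{D}$, and let $\{Q_j\} \subset \mathbb{D}_{Q_0}$ with coefficients $\alpha_j$ satisfy: $f = \sum_j \alpha_j 1_{Q_j} \in BMO(\partial\Omega)$, the Carleson packing condition with constant $C_0$, and $\sup_j|\alpha_j| \lesssim \|f\|_{BMO}$. Then $F_0 := \sum_j \alpha_j 1_{t_{Q_j}}$ (sum over modified Carleson tents) converges non-tangentially to $f$: $\lim_{Y \to x \text{ N.T.}} F_0(Y) = f(x)$ for $\sigma$-a.e. $x \in \partial\Omega$, where the limit is through the dyadic cone $\Gamma(x)$. -/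

import Mathlib

open MeasureTheory Metric Set ENNReal Filter


private lemma aux_null {X : Type*} [MeasurableSpace X] (μ : Measure X) (S : Set X) (B : ℝ≥0∞)
    (hB : B ≠ ∞) (h : ∀ s : ℝ, 0 < s → μ S ≤ ENNReal.ofReal s * B) : μ S = 0 := by
  have ht : Filter.Tendsto (fun k : ℕ => ENNReal.ofReal (1/(k+1)) * B) Filter.atTop (nhds 0) := by
    have h1 : Filter.Tendsto (fun k : ℕ => (1:ℝ)/(k+1)) Filter.atTop (nhds 0) :=
      tendsto_one_div_add_atTop_nhds_zero_nat
    simpa using ENNReal.Tendsto.mul_const (ENNReal.tendsto_ofReal h1) (Or.inr hB)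
  have hle : ∀ k : ℕ, μ S ≤ ENNReal.ofReal (1/(k+1)) * B := fun k => h _ (by positivity)
  simpa using ge_of_tendsto' ht hle

private lemma aux_finite_of_not_limsup {X : Type*} (s : ℕ → Set X) (x : X)
    (h : x ∉ Filter.limsup s Filter.atTop) : {j | x ∈ s j}.Finite := by
  rw [Filter.mem_limsup_iff_frequently_mem, Filter.not_frequently] at h
  rcases Filter.eventually_atTop.1 h with ⟨N, hN⟩
  apply Set.Finite.subset (Set.finite_Iio N)
  intro j hj
  by_contra hjN
  exact hN j (le_of_not_gt hjN) hj

private lemma aux_adr_extract {d r R : ℝ} (hd : 0 < d) (hr : 0 ≤ r) (hR : 0 ≤ R)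
    (CADR : ℝ≥0∞) (hCADR : 1 ≤ CADR) (hfin : CADR ≠ ⊤) (m : ℝ≥0∞)
    (h1 : ENNReal.ofReal r ^ d / CADR ≤ m) (h2 : m ≤ CADR * ENNReal.ofReal R ^ d) :
    r ≤ (CADR ^ ((2:ℝ)/d)).toReal * R := by
  have hC0 : CADR ≠ 0 := by intro h; simp [h] at hCADR
  have key : ENNReal.ofReal r ^ d ≤ CADR ^ (2:ℝ) * ENNReal.ofReal R ^ d := by
    have h1' : ENNReal.ofReal r ^ d ≤ m * CADR :=
      (ENNReal.div_le_iff_le_mul (Or.inl hC0) (Or.inl hfin)).1 h1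
    calc ENNReal.ofReal r ^ d ≤ (CADR * ENNReal.ofReal R ^ d) * CADR := h1'.trans (by gcongr)
      _ = CADR ^ (2:ℝ) * ENNReal.ofReal R ^ d := by rw [ENNReal.rpow_two]; ring
  have key2 : ENNReal.ofReal r ≤ CADR ^ ((2:ℝ)/d) * ENNReal.ofReal R := by
    have h3 := ENNReal.rpow_le_rpow key (le_of_lt (by positivity : (0:ℝ) < 1/d))
    rwa [ENNReal.mul_rpow_of_nonneg _ _ (by positivity), ← ENNReal.rpow_mul,
      ← ENNReal.rpow_mul, ← ENNReal.rpow_mul, mul_one_div_cancel hd.ne', ENNReal.rpow_one,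
      show (2:ℝ) * (1/d) = 2/d by ring, ENNReal.rpow_one] at h3
  have hκfin : CADR ^ ((2:ℝ)/d) ≠ ⊤ := ENNReal.rpow_ne_top_of_nonneg (by positivity) hfin
  have h4 := ENNReal.toReal_mono (by finiteness) key2
  rwa [ENNReal.toReal_ofReal hr, ENNReal.toReal_mul, ENNReal.toReal_ofReal hR] at h4

private lemma aux_dist_bound {X : Type*} [MetricSpace X] (Q : Set X) (c : X) (R r : ℝ)
    (hQ : Q ⊆ ball c R) (z Y : X) (hz : z ∈ Q) (h : infDist Y Q ≤ r) :
    dist z Y ≤ 2*R + r := by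
  refine le_of_forall_pos_le_add fun η hη => ?_
  have hne : Q.Nonempty := ⟨z, hz⟩
  have hlt : infDist Y Q < r + η := lt_of_le_of_lt h (by linarith)
  rcases (Metric.infDist_lt_iff hne).1 hlt with ⟨w, hw, hdw⟩
  have h1 : dist z w ≤ 2*R := by
    have hz' := mem_ball.1 (hQ hz); have hw' := mem_ball.1 (hQ hw)
    calc dist z w ≤ dist z c + dist w c := dist_triangle_right _ _ _
      _ ≤ 2*R := by linarith
  calc dist z Y ≤ dist z w + dist w Y := dist_triangle _ _ _
    _ ≤ 2*R + (r+η) := by rw [dist_comm Y w] at hdw; linarith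
    _ = 2*R + r + η := by ring

private lemma aux_sigma_finite {n : ℕ} (E : Set (EuclideanSpace ℝ (Fin (n+1))))
    (hcl : IsClosed E) (hne : EMetric.diam E ≠ ⊤) (h0 : EMetric.diam E ≠ 0)
    (σ : Measure (EuclideanSpace ℝ (Fin (n+1)))) (B : ℝ≥0∞) (hB : B ≠ ⊤)
    (hbound : ∀ x ∈ E, σ (ball x ((EMetric.diam E).toReal / 2)) ≤ B)
    (hout : σ Eᶜ = 0) : σ univ ≠ ⊤ := by
  set r := (EMetric.diam E).toReal / 2 with hr
  have hrpos : 0 < r := by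
    have := ENNReal.toReal_pos h0 hne
    positivity
  have hcomp : IsCompact E :=
    Metric.isCompact_of_isClosed_isBounded hcl (Metric.isBounded_iff_ediam_ne_top.2 hne)
  obtain ⟨t, ht⟩ := hcomp.elim_finite_subcover (fun x : E => ball (x:_) r)
    (fun _ => isOpen_ball) (fun x hx => mem_iUnion.2 ⟨⟨x, hx⟩, mem_ball_self hrpos⟩)
  have h1 : σ univ ≤ σ Eᶜ + σ E := by
    calc σ univ = σ (Eᶜ ∪ E) := by rw [Set.compl_union_self]
      _ ≤ σ Eᶜ + σ E := measure_union_le _ _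
  have h2 : σ E ≤ ∑ i ∈ t, σ (ball (i:_) r) :=
    le_trans (measure_mono ht) (measure_biUnion_finset_le _ _)
  have h3 : σ E ≤ ∑ _i ∈ t, B := h2.trans (Finset.sum_le_sum fun i _ => hbound i i.2)
  intro hcon
  rw [hcon] at h1
  simp only [hout, zero_add] at h1
  have h5 : σ E ≠ ⊤ := by
    refine ne_top_of_le_ne_top ?_ h3
    simp only [Finset.sum_const, nsmul_eq_mul]
    finiteness
  exact h5 (top_le_iff.1 h1)

private lemma aux_tsum_indicator {X : Type*} (α : ℕ → ℝ) (s : ℕ → Set X) (Y : X) (J : Finset ℕ)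
    (h : ∀ j, Y ∈ s j ↔ j ∈ J) :
    ∑' j, Set.indicator (s j) (fun _ => α j) Y = ∑ j ∈ J, α j := by
  rw [tsum_eq_sum (s := J) (fun b hb => Set.indicator_of_notMem (fun hY => hb ((h b).1 hY)) _)]
  exact Finset.sum_congr rfl fun j hj => Set.indicator_of_mem ((h j).2 hj) _

private lemma aux_rho_choice (C₁ γ c₁ s : ℝ) (hC : 0 < C₁) (hγ : 0 < γ) (hc : 0 < c₁)
    (hs : 0 < s) : ∃ ϱ, ϱ ∈ Ioo (0:ℝ) c₁ ∧ C₁ * ϱ ^ γ ≤ s := by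
  set ϱ := min (c₁/2) ((s/C₁) ^ (1/γ)) with hϱ
  have h1 : (0:ℝ) < (s/C₁) ^ (1/γ) := Real.rpow_pos_of_pos (by positivity) _
  refine ⟨ϱ, ⟨by positivity, lt_of_le_of_lt (min_le_left _ _) (by linarith)⟩, ?_⟩
  have h2 : ϱ ^ γ ≤ ((s/C₁) ^ (1/γ)) ^ γ :=
    Real.rpow_le_rpow (by positivity) (min_le_right _ _) hγ.le
  have h3 : ((s/C₁) ^ (1/γ)) ^ γ = s/C₁ := by
    rw [← Real.rpow_mul (by positivity), one_div_mul_cancel hγ.ne', Real.rpow_one]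
  rw [h3] at h2
  calc C₁ * ϱ ^ γ ≤ C₁ * (s/C₁) := by nlinarith
    _ = s := by field_simp

open MeasureTheory Metric Set ENNReal

/-- A Christ-type dyadic system on a set `E ⊆ ℝ^{n+1}` with respect to the measure `σ`. -/
structure DyadicSystem {n : ℕ} (E : Set (EuclideanSpace ℝ (Fin (n+1))))
    (σ : Measure (EuclideanSpace ℝ (Fin (n+1)))) where
  cubes : Set (Set (EuclideanSpace ℝ (Fin (n+1))))
  gen : Set (EuclideanSpace ℝ (Fin (n+1))) → ℤ
  center : Set (EuclideanSpace ℝ (Fin (n+1))) → EuclideanSpace ℝ (Fin (n+1))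
  c₁ : ℝ
  C₁ : ℝ
  γ : ℝ
  c₁_pos : 0 < c₁
  C₁_pos : 0 < C₁
  γ_pos : 0 < γ
  borel : ∀ Q ∈ cubes, MeasurableSet Q
  cubes_subset : ∀ Q ∈ cubes, Q ⊆ E
  nonempty : ∀ Q ∈ cubes, Q.Nonempty
  nested : ∀ Q ∈ cubes, ∀ P ∈ cubes, Q ∩ P = ∅ ∨ Q ⊆ P ∨ P ⊆ Q
  covers : ∀ k : ℤ, ⋃₀ {Q | Q ∈ cubes ∧ gen Q = k} = E
  center_mem : ∀ Q ∈ cubes, center Q ∈ E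
  subset_ball : ∀ Q ∈ cubes, Q ⊆ ball (center Q) (C₁ * (2:ℝ) ^ (-gen Q))
  ball_subset : ∀ Q ∈ cubes, E ∩ ball (center Q) (c₁ * (2:ℝ) ^ (-gen Q)) ⊆ Q
  thin_boundary : ∀ Q ∈ cubes, ∀ ϱ ∈ Ioo (0:ℝ) c₁,
    σ {x | x ∈ Q ∧ Metric.infDist x (E \ Q) ≤ ϱ * (2:ℝ) ^ (-gen Q)} ≤
      ENNReal.ofReal (C₁ * ϱ ^ γ) * σ Q

set_option maxHeartbeats 2000000 in
/-- Non-tangential convergence of the tent extension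
`F₀ = ∑_j α_j 1_{t_{Q_j}}` to `f = ∑_j α_j 1_{Q_j}` through the dyadic cones,
`σ`-a.e. on `∂Ω`. -/
theorem statement18 {n : ℕ} {d : ℝ} (hd0 : 0 < d) (hdn : d ≤ n)
    (Ω : Set (EuclideanSpace ℝ (Fin (n+1)))) (hΩ : IsOpen Ω)
    (E : Set (EuclideanSpace ℝ (Fin (n+1)))) (hEdef : E = frontier Ω) (hEne : E.Nonempty)
    -- corkscrew condition
    (ccs : ℝ) (hccs : 0 < ccs)
    (hcork : ∀ x ∈ E, ∀ r : ℝ, 0 < r → ENNReal.ofReal r < EMetric.diam E →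
      ∃ X, ball X (ccs * r) ⊆ ball x r ∩ Ω)
    (σ : Measure (EuclideanSpace ℝ (Fin (n+1))))
    (hσ : σ = (μH[d] : Measure (EuclideanSpace ℝ (Fin (n+1)))).restrict E)
    -- ∂Ω is d-ADR
    (CADR : ℝ≥0∞) (hCADR : 1 ≤ CADR) (hCADRfin : CADR ≠ ⊤)
    (hADR : ∀ x ∈ E, ∀ r : ℝ, 0 < r → ENNReal.ofReal r < EMetric.diam E →
      ENNReal.ofReal r ^ d / CADR ≤ σ (ball x r) ∧ σ (ball x r) ≤ CADR * ENNReal.ofReal r ^ d)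
    (D : DyadicSystem E σ)
    (ℓ : Set (EuclideanSpace ℝ (Fin (n+1))) → ℝ)
    (hℓ : ∀ Q, ℓ Q = (2:ℝ) ^ (-D.gen Q))
    -- the exterior thin-boundary property
    (hext : ∀ Q ∈ D.cubes, ∀ ϱ ∈ Ioo (0:ℝ) D.c₁,
      σ {x | x ∈ E \ Q ∧ Metric.infDist x Q ≤ ϱ * ℓ Q} ≤
        ENNReal.ofReal (D.C₁ * ϱ ^ D.γ) * σ Q)
    -- Whitney regions, dyadic cones, Carleson boxes
    (U T : Set (EuclideanSpace ℝ (Fin (n+1))) → Set (EuclideanSpace ℝ (Fin (n+1))))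
    (Γ : EuclideanSpace ℝ (Fin (n+1)) → Set (EuclideanSpace ℝ (Fin (n+1))))
    (hUΩ : ∀ Q ∈ D.cubes, U Q ⊆ Ω)
    (hΓ : ∀ y, Γ y = ⋃ Q ∈ {Q | Q ∈ D.cubes ∧ y ∈ Q}, U Q)
    (hT : ∀ Q, T Q = ⋃ Q' ∈ {Q' | Q' ∈ D.cubes ∧ Q' ⊆ Q}, U Q')
    -- on U_Q, δ(Y) ≈ ℓ(Q) and dist(Y, Q) ≲ ℓ(Q)
    (cU CU : ℝ) (hcU : 0 < cU) (hCU : 0 < CU)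
    (hδcomp : ∀ Q ∈ D.cubes, ∀ Y ∈ U Q,
      cU * ℓ Q ≤ Metric.infDist Y E ∧ Metric.infDist Y E ≤ CU * ℓ Q ∧
        Metric.infDist Y Q ≤ CU * ℓ Q)
    -- the fixed cube Q₀, the collection {Q_j} ⊆ 𝔻_{Q₀} and the coefficients α_j
    (Q₀ : Set (EuclideanSpace ℝ (Fin (n+1)))) (hQ₀ : Q₀ ∈ D.cubes)
    (Qj : ℕ → Set (EuclideanSpace ℝ (Fin (n+1))))
    (hQj : ∀ j, Qj j ∈ D.cubes ∧ Qj j ⊆ Q₀)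
    (α : ℕ → ℝ)
    -- Carleson packing condition with constant C₀
    (C₀ : ℝ≥0∞) (hC₀ : 1 ≤ C₀) (hC₀fin : C₀ ≠ ⊤)
    (hpack : ∀ Q ∈ D.cubes,
      (∑' j : {j : ℕ // Qj j ⊆ Q}, σ (Qj j.1)) ≤ C₀ * σ Q)
    -- uniformly bounded coefficients (by a multiple of the BMO norm of f)
    (A : ℝ) (hA : 0 ≤ A) (hαbd : ∀ j, |α j| ≤ A)
    -- the modified Carleson tents t_{Q}: τ_Q ⊆ t_Q ⊆ T_Q, monotone and disjoint
    (t : Set (EuclideanSpace ℝ (Fin (n+1))) → Set (EuclideanSpace ℝ (Fin (n+1))))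
    (ht1 : ∀ Q ∈ D.cubes, Q ⊆ Q₀ → t Q ⊆ T Q)
    (ht2 : ∀ Q ∈ D.cubes, Q ⊆ Q₀ → Ω \ (⋃ y ∈ E \ Q, Γ y) ⊆ t Q)
    (ht3 : ∀ Q₁ ∈ D.cubes, ∀ Q₂ ∈ D.cubes, Q₁ ⊆ Q₀ → Q₂ ⊆ Q₀ → Q₁ ⊆ Q₂ → t Q₁ ⊆ t Q₂)
    (ht4 : ∀ Q₁ ∈ D.cubes, ∀ Q₂ ∈ D.cubes, Q₁ ⊆ Q₀ → Q₂ ⊆ Q₀ → Q₁ ∩ Q₂ = ∅ →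
      t Q₁ ∩ t Q₂ = ∅)
    -- the boundary function f and its tent extension F₀
    (f : EuclideanSpace ℝ (Fin (n+1)) → ℝ)
    (hf : ∀ x, f x = ∑' j, Set.indicator (Qj j) (fun _ => α j) x)
    (F₀ : EuclideanSpace ℝ (Fin (n+1)) → ℝ)
    (hF₀ : ∀ Y, F₀ Y = ∑' j, Set.indicator (t (Qj j)) (fun _ => α j) Y) :
    ∀ᵐ x ∂σ, Filter.Tendsto F₀ (nhdsWithin x (Γ x)) (nhds (f x)) := by
  classical
  -- basic facts about E and σ
  have hEclosed : IsClosed E := hEdef ▸ isClosed_frontier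
  have hEmeas : MeasurableSet E := hEclosed.measurableSet
  have hσout : σ Eᶜ = 0 := by
    rw [hσ, Measure.restrict_apply hEmeas.compl]
    simp
  have hℓpos : ∀ Q, 0 < ℓ Q := fun Q => by rw [hℓ]; exact zpow_pos (by norm_num) _
  -- trivial case: E is a single point
  by_cases hE0 : EMetric.diam E = 0
  · have hsub : E.Subsingleton := EMetric.diam_eq_zero_iff.1 hE0
    have hμE : μH[d] E = 0 := by
      haveI := MeasureTheory.Measure.noAtoms_hausdorff (EuclideanSpace ℝ (Fin (n+1))) hd0
      rcases hsub.eq_empty_or_singleton with rfl | ⟨p, rfl⟩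
      · simp
      · simp [measure_singleton]
    have hσ0 : σ = 0 := by
      apply Measure.measure_univ_eq_zero.1
      have h1 : σ univ ≤ σ Eᶜ + σ E := by
        calc σ univ = σ (Eᶜ ∪ E) := by rw [Set.compl_union_self]
          _ ≤ σ Eᶜ + σ E := measure_union_le _ _
      have h2 : σ E = 0 := by
        rw [hσ, Measure.restrict_apply hEmeas]
        exact le_antisymm (le_trans (measure_mono (Set.inter_subset_left)) hμE.le) zero_le
      simpa [hσout, h2] using h1
    rw [hσ0]
    simp
  -- main case
  set e := EMetric.diam E with he
  -- σ of balls: ADR bounds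
  -- comparison of σ through E-intersections
  have hσle : ∀ (S : Set (EuclideanSpace ℝ (Fin (n+1)))), MeasurableSet S →
      ∀ P ∈ D.cubes, E ∩ S ⊆ P → σ S ≤ σ P := by
    intro S hS P hP hsubset
    rw [hσ, Measure.restrict_apply hS, Measure.restrict_apply (D.borel P hP)]
    refine measure_mono fun z hz => ⟨hsubset ⟨hz.2, hz.1⟩, hz.2⟩
  -- finiteness of σ on the whole space when diam E is finite
  have hSfin : e ≠ ⊤ → σ univ ≠ ⊤ := by
    intro hefin
    refine aux_sigma_finite E hEclosed hefin hE0 σ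
      (CADR * ENNReal.ofReal (e.toReal / 2) ^ d)
      (ENNReal.mul_ne_top hCADRfin (ENNReal.rpow_ne_top_of_nonneg hd0.le ENNReal.ofReal_ne_top))
      (fun x hx => ?_) hσout
    have hpos : 0 < e.toReal / 2 := by
      have := ENNReal.toReal_pos hE0 hefin; positivity
    have hlt : ENNReal.ofReal (e.toReal / 2) < e := by
      calc ENNReal.ofReal (e.toReal / 2) < ENNReal.ofReal e.toReal := by
            rw [ENNReal.ofReal_lt_ofReal_iff (ENNReal.toReal_pos hE0 hefin)]; linarith
        _ = e := ENNReal.ofReal_toReal hefin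
    exact (hADR x hx _ hpos hlt).2
  -- σ is finite on every cube
  have hcubefin : ∀ Q ∈ D.cubes, σ Q ≠ ⊤ := by
    intro Q hQ
    by_cases hlt : ENNReal.ofReal (D.C₁ * ℓ Q) < e
    · have h1 : σ Q ≤ σ (ball (D.center Q) (D.C₁ * ℓ Q)) := by
        refine measure_mono ?_
        rw [hℓ]; exact D.subset_ball Q hQ
      have h2 := (hADR _ (D.center_mem Q hQ) _ (mul_pos D.C₁_pos (hℓpos Q)) hlt).2
      exact ne_top_of_le_ne_top
        (ENNReal.mul_ne_top hCADRfin (ENNReal.rpow_ne_top_of_nonneg hd0.le ENNReal.ofReal_ne_top))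
        (h1.trans h2)
    · have hefin : e ≠ ⊤ := by
        intro hcon; rw [hcon] at hlt; exact hlt (ENNReal.ofReal_lt_top)
      exact ne_top_of_le_ne_top (hSfin hefin) (measure_mono (subset_univ _))
  have hQjfin : ∀ j, σ (Qj j) ≠ ⊤ := fun j => hcubefin _ (hQj j).1
  -- total mass of the packing
  have hsum : ∑' j, σ (Qj j) ≠ ⊤ := by
    have h1 : (∑' j : {j : ℕ // Qj j ⊆ Q₀}, σ (Qj j.1)) = ∑' j, σ (Qj j) :=
      ((Equiv.subtypeUnivEquiv (fun j => (hQj j).2)).symm.tsum_eq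
        (fun s : {j : ℕ // Qj j ⊆ Q₀} => σ (Qj s.1))).symm
    have h2 := hpack Q₀ hQ₀
    rw [h1] at h2
    exact ne_top_of_le_ne_top (by
      exact ENNReal.mul_ne_top hC₀fin (hcubefin Q₀ hQ₀)) h2
  -- interior thin boundary : a.e. positive distance to the exterior
  have hg1 : ∀ᵐ x ∂σ, ∀ j, x ∈ Qj j → 0 < infDist x (E \ Qj j) := by
    rw [ae_all_iff]
    intro j
    have hnull : σ {x | x ∈ Qj j ∧ infDist x (E \ Qj j) ≤ 0} = 0 := by
      refine aux_null σ _ (σ (Qj j)) (hQjfin j) fun s hs => ?_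
      obtain ⟨ϱ, hϱ, hϱle⟩ := aux_rho_choice D.C₁ D.γ D.c₁ s D.C₁_pos D.γ_pos D.c₁_pos hs
      have h1 := D.thin_boundary (Qj j) (hQj j).1 ϱ hϱ
      refine le_trans (le_trans (measure_mono ?_) h1) ?_
      · intro x hx
        refine ⟨hx.1, le_trans hx.2 ?_⟩
        have h2 := hℓpos (Qj j); rw [hℓ] at h2
        exact le_of_lt (mul_pos hϱ.1 h2)
      · exact mul_le_mul_left (ENNReal.ofReal_le_ofReal hϱle) _
    filter_upwards [measure_eq_zero_iff_ae_notMem.1 hnull] with x hx hxQ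
    by_contra hcon
    exact hx ⟨hxQ, le_of_not_gt hcon⟩
  -- exterior thin boundary : a.e. positive distance to the cube
  have hg2 : ∀ᵐ x ∂σ, ∀ j, x ∈ E → x ∉ Qj j → 0 < infDist x (Qj j) := by
    rw [ae_all_iff]
    intro j
    have hnull : σ {x | x ∈ E \ Qj j ∧ infDist x (Qj j) ≤ 0} = 0 := by
      refine aux_null σ _ (σ (Qj j)) (hQjfin j) fun s hs => ?_
      obtain ⟨ϱ, hϱ, hϱle⟩ := aux_rho_choice D.C₁ D.γ D.c₁ s D.C₁_pos D.γ_pos D.c₁_pos hs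
      have h1 := hext (Qj j) (hQj j).1 ϱ hϱ
      refine le_trans (le_trans (measure_mono ?_) h1) ?_
      · intro x hx
        refine ⟨hx.1, le_trans hx.2 ?_⟩
        exact le_of_lt (mul_pos hϱ.1 (hℓpos (Qj j)))
      · exact mul_le_mul_left (ENNReal.ofReal_le_ofReal hϱle) _
    filter_upwards [measure_eq_zero_iff_ae_notMem.1 hnull] with x hx hxE hxQ
    by_contra hcon
    exact hx ⟨⟨hxE, hxQ⟩, le_of_not_gt hcon⟩
  -- a.e. point is in finitely many Q_j
  have hg3 : ∀ᵐ x ∂σ, {j | x ∈ Qj j}.Finite := by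
    have h0 := measure_limsup_atTop_eq_zero (μ := σ) (s := Qj) hsum
    filter_upwards [measure_eq_zero_iff_ae_notMem.1 h0] with x hx
    exact aux_finite_of_not_limsup Qj x hx
  have hg0 : ∀ᵐ x ∂σ, x ∈ E := by
    filter_upwards [measure_eq_zero_iff_ae_notMem.1 hσout] with x hx
    simpa using hx
  -- the fixed geometric constants
  set Cnt : ℝ := 2*D.C₁ + CU with hCnt
  have hCntpos : 0 < Cnt := by rw [hCnt]; have := D.C₁_pos; linarith
  set K₁ : ℝ := 2*Cnt/cU with hK₁
  have hK₁pos : 0 < K₁ := div_pos (by linarith) hcU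
  set K₂ : ℝ := 1 + CU/cU with hK₂
  have hK₂pos : 0 < K₂ := by have := div_pos hCU hcU; rw [hK₂]; linarith
  set c₃ : ℝ := cU/(CU*Cnt) with hc₃
  have hc₃pos : 0 < c₃ := div_pos hcU (mul_pos hCU hCntpos)
  set κ : ℝ := (CADR ^ ((2:ℝ)/d)).toReal with hκ
  have hκ1 : 1 ≤ κ := by
    rw [hκ]
    have h1 : (1:ℝ≥0∞) ≤ CADR ^ ((2:ℝ)/d) := by
      calc (1:ℝ≥0∞) = 1 ^ ((2:ℝ)/d) := by rw [ENNReal.one_rpow]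
        _ ≤ CADR ^ ((2:ℝ)/d) := by gcongr
    have h2 : CADR ^ ((2:ℝ)/d) ≠ ⊤ := ENNReal.rpow_ne_top_of_nonneg (by positivity) hCADRfin
    calc (1:ℝ) = (1:ℝ≥0∞).toReal := by simp
      _ ≤ _ := ENNReal.toReal_mono h2 h1
  have hκpos : 0 < κ := lt_of_lt_of_le one_pos hκ1
  -- the basic diameter estimate on Whitney regions
  have hstar : ∀ Q ∈ D.cubes, ∀ z ∈ Q, ∀ Y ∈ U Q, dist z Y ≤ Cnt * ℓ Q := by
    intro Q hQ z hz Y hY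
    have h1 : Q ⊆ ball (D.center Q) (D.C₁ * ℓ Q) := by rw [hℓ]; exact D.subset_ball Q hQ
    have h2 : infDist Y Q ≤ CU * ℓ Q := (hδcomp Q hQ Y hY).2.2
    have := aux_dist_bound Q (D.center Q) (D.C₁ * ℓ Q) (CU * ℓ Q) h1 z Y hz h2
    calc dist z Y ≤ 2*(D.C₁ * ℓ Q) + CU * ℓ Q := this
      _ = Cnt * ℓ Q := by rw [hCnt]; ring
  -- the ADR comparison step
  have hL4 : ∃ c₄ : ℝ, 0 < c₄ ∧ c₄ ≤ 1 ∧ ∃ ε₁ : ℝ, 0 < ε₁ ∧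
      ∀ ε : ℝ, 0 < ε → ε ≤ ε₁ → ∀ P ∈ D.cubes, ∀ Q ∈ D.cubes, Q ⊆ P → c₃ * ε ≤ ℓ Q →
        c₄ * ε ≤ ℓ P := by
    have hc4pos' : 0 < D.c₁ * c₃ / (κ * D.C₁) :=
      div_pos (mul_pos D.c₁_pos hc₃pos) (mul_pos hκpos D.C₁_pos)
    have hmain : ∀ ε : ℝ, 0 < ε → ∀ P ∈ D.cubes, ∀ Q ∈ D.cubes, Q ⊆ P → c₃ * ε ≤ ℓ Q →
        ENNReal.ofReal (D.c₁ * (c₃ * ε)) < e → ENNReal.ofReal (D.C₁ * ℓ P) < e →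
        min (D.c₁ * c₃ / (κ * D.C₁)) 1 * ε ≤ ℓ P := by
      intro ε hε P hP Q hQ hQP hℓQ hofr hofP
      have hrpos : 0 < D.c₁ * (c₃ * ε) := mul_pos D.c₁_pos (mul_pos hc₃pos hε)
      have hsub : E ∩ ball (D.center Q) (D.c₁ * (c₃ * ε)) ⊆ P := by
        intro z hz
        apply hQP
        apply D.ball_subset Q hQ
        refine ⟨hz.1, ?_⟩
        have hrle : D.c₁ * (c₃ * ε) ≤ D.c₁ * (2:ℝ) ^ (-D.gen Q) := by
          rw [← hℓ]
          exact mul_le_mul_of_nonneg_left hℓQ D.c₁_pos.le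
        exact ball_subset_ball hrle hz.2
      have h1 := (hADR _ (D.center_mem Q hQ) _ hrpos hofr).1
      have h2 : σ (ball (D.center Q) (D.c₁ * (c₃ * ε))) ≤ σ P :=
        hσle _ measurableSet_ball P hP hsub
      have h3 : σ P ≤ σ (ball (D.center P) (D.C₁ * ℓ P)) :=
        measure_mono (by rw [hℓ]; exact D.subset_ball P hP)
      have h4 := (hADR _ (D.center_mem P hP) _ (mul_pos D.C₁_pos (hℓpos P)) hofP).2
      have h5 : D.c₁ * (c₃ * ε) ≤ κ * (D.C₁ * ℓ P) :=
        aux_adr_extract hd0 hrpos.le (mul_pos D.C₁_pos (hℓpos P)).le CADR hCADR hCADRfin (σ P)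
          (h1.trans h2) (h3.trans h4)
      calc min (D.c₁ * c₃ / (κ * D.C₁)) 1 * ε ≤ D.c₁ * c₃ / (κ * D.C₁) * ε :=
            mul_le_mul_of_nonneg_right (min_le_left _ _) hε.le
        _ ≤ ℓ P := by
            rw [div_mul_eq_mul_div, div_le_iff₀ (mul_pos hκpos D.C₁_pos)]
            nlinarith [mul_pos hκpos D.C₁_pos]
    by_cases hetop : e = ⊤
    · refine ⟨min (D.c₁ * c₃ / (κ * D.C₁)) 1, lt_min hc4pos' one_pos, min_le_right _ _,
        1, one_pos, ?_⟩
      intro ε hε _ P hP Q hQ hQP hℓQ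
      exact hmain ε hε P hP Q hQ hQP hℓQ (by rw [hetop]; exact ENNReal.ofReal_lt_top)
        (by rw [hetop]; exact ENNReal.ofReal_lt_top)
    · have hetr : 0 < e.toReal := ENNReal.toReal_pos hE0 hetop
      have hden : 0 < 2 * (D.c₁ * c₃) := by
        have := mul_pos D.c₁_pos hc₃pos; linarith
      refine ⟨min (D.c₁ * c₃ / (κ * D.C₁)) 1, lt_min hc4pos' one_pos, min_le_right _ _,
        min (e.toReal / (2 * (D.c₁ * c₃))) (e.toReal / D.C₁),
        lt_min (div_pos hetr hden) (div_pos hetr D.C₁_pos), ?_⟩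
      intro ε hε hεle P hP Q hQ hQP hℓQ
      have hofr : ENNReal.ofReal (D.c₁ * (c₃ * ε)) < e := by
        have h6 : ε ≤ e.toReal / (2 * (D.c₁ * c₃)) := le_trans hεle (min_le_left _ _)
        rw [le_div_iff₀ hden] at h6
        calc ENNReal.ofReal (D.c₁ * (c₃ * ε)) ≤ ENNReal.ofReal (e.toReal / 2) :=
              ENNReal.ofReal_le_ofReal (by nlinarith)
          _ < ENNReal.ofReal e.toReal := by
              rw [ENNReal.ofReal_lt_ofReal_iff hetr]; linarith
          _ = e := ENNReal.ofReal_toReal hetop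
      by_cases hofP : ENNReal.ofReal (D.C₁ * ℓ P) < e
      · exact hmain ε hε P hP Q hQ hQP hℓQ hofr hofP
      · push_neg at hofP
        have h5 : e.toReal ≤ D.C₁ * ℓ P := by
          have h7 := ENNReal.toReal_mono ENNReal.ofReal_ne_top hofP
          rwa [ENNReal.toReal_ofReal (mul_pos D.C₁_pos (hℓpos P)).le] at h7
        have h6 : ε ≤ e.toReal / D.C₁ := le_trans hεle (min_le_right _ _)
        rw [le_div_iff₀ D.C₁_pos] at h6
        have h7 : ε ≤ ℓ P := by nlinarith [D.C₁_pos]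
        calc min (D.c₁ * c₃ / (κ * D.C₁)) 1 * ε ≤ 1 * ε :=
              mul_le_mul_of_nonneg_right (min_le_right _ _) hε.le
          _ ≤ ℓ P := by linarith
  obtain ⟨c₄, hc₄pos, hc₄le1, ε₁, hε₁pos, hL4⟩ := hL4
  set M : ℝ := K₂ / c₄ with hM
  have hMpos : 0 < M := div_pos hK₂pos hc₄pos
  -- the enlarged sets A j and the Borel-Cantelli estimate for them
  set A : ℕ → Set (EuclideanSpace ℝ (Fin (n+1))) :=
    fun j => {y | y ∈ E ∧ infDist y (Qj j) ≤ M * ℓ (Qj j)} with hA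
  have hg4 : ∀ᵐ x ∂σ, {j | x ∈ A j}.Finite := by
    have hM1 : 0 < D.C₁ + M + 1 := by have := D.C₁_pos; linarith
    obtain ⟨CA, hCAfin, hCA⟩ : ∃ CA : ℝ≥0∞, CA ≠ ⊤ ∧ ∀ j, σ (A j) ≤ CA * σ (Qj j) := by
      set ρ : ℝ := max ((D.C₁ + M + 1) / D.c₁) 2 with hρ
      have hρpos : (0:ℝ) < ρ := lt_of_lt_of_le two_pos (le_max_right _ _)
      set CA₁ : ℝ≥0∞ := CADR * ENNReal.ofReal ρ ^ d * CADR with hCA₁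
      have hCA₁fin : CA₁ ≠ ⊤ := ENNReal.mul_ne_top (ENNReal.mul_ne_top hCADRfin
        (ENNReal.rpow_ne_top_of_nonneg hd0.le ENNReal.ofReal_ne_top)) hCADRfin
      have hAball : ∀ j, A j ⊆ ball (D.center (Qj j)) ((D.C₁ + M + 1) * ℓ (Qj j)) := by
        intro j y hy
        have hℓj := hℓpos (Qj j)
        have h1 : infDist y (Qj j) < (M + 1) * ℓ (Qj j) := lt_of_le_of_lt hy.2 (by nlinarith)
        rcases (Metric.infDist_lt_iff (D.nonempty _ (hQj j).1)).1 h1 with ⟨z, hz, hdz⟩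
        have h2 : dist z (D.center (Qj j)) < D.C₁ * ℓ (Qj j) := by
          have h3 := D.subset_ball _ (hQj j).1 hz
          rw [← hℓ] at h3
          exact mem_ball.1 h3
        refine mem_ball.2 ?_
        calc dist y (D.center (Qj j)) ≤ dist y z + dist z (D.center (Qj j)) :=
              dist_triangle _ _ _
          _ < (D.C₁ + M + 1) * ℓ (Qj j) := by nlinarith
      have hlow : ∀ (j : ℕ) (r : ℝ), 0 < r → r ≤ D.c₁ * ℓ (Qj j) → ENNReal.ofReal r < e →
          ENNReal.ofReal r ^ d / CADR ≤ σ (Qj j) := by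
        intro j r hr hrle hofr
        refine le_trans ((hADR _ (D.center_mem _ (hQj j).1) r hr hofr).1) ?_
        refine hσle _ measurableSet_ball _ (hQj j).1 ?_
        intro z hz
        apply D.ball_subset _ (hQj j).1
        refine ⟨hz.1, ?_⟩
        have hrle2 : r ≤ D.c₁ * (2:ℝ) ^ (-D.gen (Qj j)) := by rw [← hℓ]; exact hrle
        exact ball_subset_ball hrle2 hz.2
      have hcore : ∀ (j : ℕ) (rj : ℝ), 0 < rj → rj ≤ D.c₁ * ℓ (Qj j) →
          ENNReal.ofReal rj < e → (D.C₁ + M + 1) * ℓ (Qj j) ≤ ρ * rj →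
          ENNReal.ofReal ((D.C₁ + M + 1) * ℓ (Qj j)) < e → σ (A j) ≤ CA₁ * σ (Qj j) := by
        intro j rj hrj hrjle hofrj hRρ hofR
        have h1 : σ (A j) ≤ σ (ball (D.center (Qj j)) ((D.C₁ + M + 1) * ℓ (Qj j))) :=
          measure_mono (hAball j)
        have h2 := (hADR _ (D.center_mem _ (hQj j).1) _
          (mul_pos hM1 (hℓpos (Qj j))) hofR).2
        have h3 : ENNReal.ofReal ((D.C₁ + M + 1) * ℓ (Qj j)) ^ d ≤
            ENNReal.ofReal ρ ^ d * ENNReal.ofReal rj ^ d := by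
          rw [← ENNReal.mul_rpow_of_nonneg _ _ hd0.le, ← ENNReal.ofReal_mul hρpos.le]
          exact ENNReal.rpow_le_rpow (ENNReal.ofReal_le_ofReal hRρ) hd0.le
        have h4 : ENNReal.ofReal rj ^ d ≤ σ (Qj j) * CADR :=
          (ENNReal.div_le_iff_le_mul (Or.inl (by intro h; simp [h] at hCADR))
            (Or.inl hCADRfin)).1 (hlow j rj hrj hrjle hofrj)
        calc σ (A j) ≤ CADR * ENNReal.ofReal ((D.C₁ + M + 1) * ℓ (Qj j)) ^ d := h1.trans h2
          _ ≤ CADR * (ENNReal.ofReal ρ ^ d * (σ (Qj j) * CADR)) := by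
              refine mul_le_mul_right (h3.trans ?_) _
              exact mul_le_mul_right h4 _
          _ = CA₁ * σ (Qj j) := by rw [hCA₁]; ring
      by_cases hetop : e = ⊤
      · refine ⟨CA₁, hCA₁fin, fun j => ?_⟩
        refine hcore j (D.c₁ * ℓ (Qj j)) (mul_pos D.c₁_pos (hℓpos _)) le_rfl
          (by rw [hetop]; exact ENNReal.ofReal_lt_top) ?_
          (by rw [hetop]; exact ENNReal.ofReal_lt_top)
        calc (D.C₁ + M + 1) * ℓ (Qj j) = (D.C₁ + M + 1) / D.c₁ * (D.c₁ * ℓ (Qj j)) := by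
              rw [div_mul_eq_mul_div, mul_div_assoc, mul_div_cancel_left₀ _ D.c₁_pos.ne']
          _ ≤ ρ * (D.c₁ * ℓ (Qj j)) := mul_le_mul_of_nonneg_right (le_max_left _ _)
              (mul_pos D.c₁_pos (hℓpos _)).le
      · have hetr : 0 < e.toReal := ENNReal.toReal_pos hE0 hetop
        set κ₂ : ℝ := min (D.c₁ / (D.C₁ + M + 1)) (1/2) with hκ₂
        have hκ₂pos : 0 < κ₂ := lt_min (div_pos D.c₁_pos hM1) (by norm_num)
        set w : ℝ≥0∞ := ENNReal.ofReal (κ₂ * e.toReal) ^ d with hw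
        have hwpos : w ≠ 0 := by
          have : (0:ℝ≥0∞) < ENNReal.ofReal (κ₂ * e.toReal) :=
            ENNReal.ofReal_pos.2 (mul_pos hκ₂pos hetr)
          exact (ENNReal.rpow_pos this ENNReal.ofReal_ne_top).ne'
        have hwfin : w ≠ ⊤ := ENNReal.rpow_ne_top_of_nonneg hd0.le ENNReal.ofReal_ne_top
        set CA₂ : ℝ≥0∞ := σ univ * CADR / w with hCA₂
        have hCA₂fin : CA₂ ≠ ⊤ := by
          rw [hCA₂, div_eq_mul_inv]
          exact ENNReal.mul_ne_top (ENNReal.mul_ne_top (hSfin hetop) hCADRfin)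
            (ENNReal.inv_ne_top.2 hwpos)
        refine ⟨max CA₁ CA₂, (max_lt (lt_top_iff_ne_top.2 hCA₁fin)
          (lt_top_iff_ne_top.2 hCA₂fin)).ne, fun j => ?_⟩
        have hℓj := hℓpos (Qj j)
        set rj : ℝ := min (D.c₁ * ℓ (Qj j)) (e.toReal / 2) with hrj
        have hrjpos : 0 < rj := lt_min (mul_pos D.c₁_pos hℓj) (by linarith)
        have hrjle : rj ≤ D.c₁ * ℓ (Qj j) := min_le_left _ _
        have hofrj : ENNReal.ofReal rj < e := by
          calc ENNReal.ofReal rj ≤ ENNReal.ofReal (e.toReal / 2) :=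
                ENNReal.ofReal_le_ofReal (min_le_right _ _)
            _ < ENNReal.ofReal e.toReal := by
                rw [ENNReal.ofReal_lt_ofReal_iff hetr]; linarith
            _ = e := ENNReal.ofReal_toReal hetop
        by_cases hofR : ENNReal.ofReal ((D.C₁ + M + 1) * ℓ (Qj j)) < e
        · refine le_trans (hcore j rj hrjpos hrjle hofrj ?_ hofR)
            (mul_le_mul_left (le_max_left _ _) _)
          rcases le_total (D.c₁ * ℓ (Qj j)) (e.toReal / 2) with hc | hc
          · have hrjeq : rj = D.c₁ * ℓ (Qj j) := min_eq_left hc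
            rw [hrjeq]
            calc (D.C₁ + M + 1) * ℓ (Qj j) = (D.C₁ + M + 1) / D.c₁ * (D.c₁ * ℓ (Qj j)) := by
                  rw [div_mul_eq_mul_div, mul_div_assoc, mul_div_cancel_left₀ _ D.c₁_pos.ne']
              _ ≤ ρ * (D.c₁ * ℓ (Qj j)) := mul_le_mul_of_nonneg_right (le_max_left _ _)
                  (mul_pos D.c₁_pos hℓj).le
          · have hrjeq : rj = e.toReal / 2 := min_eq_right hc
            have hRle : (D.C₁ + M + 1) * ℓ (Qj j) ≤ e.toReal := by
              have h7 := ENNReal.toReal_mono hetop hofR.le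
              rwa [ENNReal.toReal_ofReal (mul_pos hM1 hℓj).le] at h7
            rw [hrjeq]
            calc (D.C₁ + M + 1) * ℓ (Qj j) ≤ e.toReal := hRle
              _ = 2 * (e.toReal / 2) := by ring
              _ ≤ ρ * (e.toReal / 2) := mul_le_mul_of_nonneg_right (le_max_right _ _)
                  (by linarith)
        · push_neg at hofR
          have hRge : e.toReal ≤ (D.C₁ + M + 1) * ℓ (Qj j) := by
            have h7 := ENNReal.toReal_mono ENNReal.ofReal_ne_top hofR
            rwa [ENNReal.toReal_ofReal (mul_pos hM1 hℓj).le] at h7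
          have hrjge : κ₂ * e.toReal ≤ rj := by
            refine le_min ?_ ?_
            · calc κ₂ * e.toReal ≤ D.c₁ / (D.C₁ + M + 1) * e.toReal :=
                  mul_le_mul_of_nonneg_right (min_le_left _ _) hetr.le
                _ ≤ D.c₁ * ℓ (Qj j) := by
                  rw [div_mul_eq_mul_div, div_le_iff₀ hM1]
                  nlinarith [D.c₁_pos]
            · calc κ₂ * e.toReal ≤ 1/2 * e.toReal :=
                  mul_le_mul_of_nonneg_right (min_le_right _ _) hetr.le
                _ = e.toReal / 2 := by ring
          have hwle : w / CADR ≤ σ (Qj j) := by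
            refine le_trans (ENNReal.div_le_div_right ?_ _) (hlow j rj hrjpos hrjle hofrj)
            exact ENNReal.rpow_le_rpow (ENNReal.ofReal_le_ofReal hrjge) hd0.le
          have hCne : CADR ≠ 0 := by intro h; simp [h] at hCADR
          have key : CA₂ * (w / CADR) = σ univ := by
            rw [hCA₂, div_eq_mul_inv, div_eq_mul_inv]
            calc σ univ * CADR * w⁻¹ * (w * CADR⁻¹)
                = σ univ * (CADR * CADR⁻¹) * (w⁻¹ * w) := by ring
              _ = σ univ := by
                  rw [ENNReal.mul_inv_cancel hCne hCADRfin,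
                    ENNReal.inv_mul_cancel hwpos hwfin, mul_one, mul_one]
          calc σ (A j) ≤ σ univ := measure_mono (subset_univ _)
            _ = CA₂ * (w / CADR) := key.symm
            _ ≤ CA₂ * σ (Qj j) := mul_le_mul_right hwle _
            _ ≤ max CA₁ CA₂ * σ (Qj j) := mul_le_mul_left (le_max_right _ _) _
    have hsumA : ∑' j, σ (A j) ≠ ⊤ := by
      refine ne_top_of_le_ne_top ?_ (ENNReal.tsum_le_tsum fun j => hCA j)
      rw [ENNReal.tsum_mul_left]
      exact ENNReal.mul_ne_top hCAfin hsum
    have h0 := measure_limsup_atTop_eq_zero (μ := σ) (s := A) hsumA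
    filter_upwards [measure_eq_zero_iff_ae_notMem.1 h0] with x hx
    exact aux_finite_of_not_limsup A x hx
  -- main pointwise argument
  filter_upwards [hg0, hg1, hg2, hg3, hg4] with x hx0 hx1 hx2 hx3 hx4
  have hxΩ : x ∉ Ω := by
    intro h
    have hfr : x ∈ frontier Ω := hEdef ▸ hx0
    rw [hΩ.frontier_eq] at hfr
    exact hfr.2 (hΩ.interior_eq ▸ h)
  have hΓΩ : Γ x ⊆ Ω := by
    rw [hΓ x]
    intro Y hY
    rcases mem_iUnion₂.1 hY with ⟨Q', hQ', hYQ'⟩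
    exact hUΩ Q' hQ'.1 hYQ'
  set J : Finset ℕ := hx3.toFinset with hJ
  have hJmem : ∀ j, j ∈ J ↔ x ∈ Qj j := fun j => by
    rw [hJ, Set.Finite.mem_toFinset]; rfl
  set F4 : Finset ℕ := hx4.toFinset with hF4
  have hF4mem : ∀ j, j ∈ F4 ↔ x ∈ A j := fun j => by
    rw [hF4, Set.Finite.mem_toFinset]; rfl
  have hev_dist : ∀ c : ℝ, 0 < c → ∀ᶠ Y in nhdsWithin x (Γ x), dist x Y < c := by
    intro c hc
    have h : {Y : EuclideanSpace ℝ (Fin (n+1)) | dist x Y < c} ∈ nhds x := by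
      have h2 := Metric.ball_mem_nhds x hc
      have h3 : Metric.ball x c = {Y : EuclideanSpace ℝ (Fin (n+1)) | dist x Y < c} := by
        ext Y; simp [Metric.mem_ball, dist_comm]
      rwa [h3] at h2
    exact mem_nhdsWithin_of_mem_nhds h
  have hev_mem : ∀ᶠ Y in nhdsWithin x (Γ x), Y ∈ Γ x := eventually_mem_nhdsWithin
  -- eventuality 1 : tents over cubes containing x eventually contain Y
  have hev1 : ∀ᶠ Y in nhdsWithin x (Γ x), ∀ j ∈ J, Y ∈ t (Qj j) := by
    rw [Filter.eventually_all_finset]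
    intro j hj
    have hxQ : x ∈ Qj j := (hJmem j).1 hj
    have hr : 0 < infDist x (E \ Qj j) := hx1 j hxQ
    filter_upwards [hev_dist (infDist x (E \ Qj j) / K₁) (div_pos hr hK₁pos), hev_mem]
      with Y hYd hYΓ
    by_contra hYt
    have hYΩ : Y ∈ Ω := hΓΩ hYΓ
    have hbigU : Y ∈ ⋃ y ∈ E \ Qj j, Γ y := by
      by_contra hno
      exact hYt (ht2 (Qj j) (hQj j).1 (hQj j).2 ⟨hYΩ, hno⟩)
    rcases mem_iUnion₂.1 hbigU with ⟨y, hy, hYΓy⟩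
    rw [hΓ y] at hYΓy
    rcases mem_iUnion₂.1 hYΓy with ⟨Q'', hQ'', hYU''⟩
    rw [hΓ x] at hYΓ
    rcases mem_iUnion₂.1 hYΓ with ⟨Q', hQ', hYU'⟩
    have hδY : infDist Y E ≤ dist x Y := by
      rw [dist_comm]; exact Metric.infDist_le_dist_of_mem hx0
    have hd2 : dist y Y ≤ Cnt * ℓ Q'' := hstar Q'' hQ''.1 y hQ''.2 Y hYU''
    have hℓ1 : cU * ℓ Q' ≤ infDist Y E := (hδcomp Q' hQ'.1 Y hYU').1
    have hℓ2 : cU * ℓ Q'' ≤ infDist Y E := (hδcomp Q'' hQ''.1 Y hYU'').1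
    have hup : infDist Y E ≤ CU * ℓ Q' := (hδcomp Q' hQ'.1 Y hYU').2.1
    have hcCnt : cU ≤ Cnt := by
      have h5 : cU * ℓ Q' ≤ CU * ℓ Q' := hℓ1.trans hup
      rw [mul_comm cU, mul_comm CU] at h5
      have hcC : cU ≤ CU := le_of_mul_le_mul_left h5 (hℓpos Q')
      rw [hCnt]; have := D.C₁_pos; linarith
    have hxy : cU * dist x y ≤ 2 * Cnt * dist x Y := by
      have htri : dist x y ≤ dist x Y + dist y Y := by
        rw [dist_comm y Y]; exact dist_triangle x Y y
      have f1 := mul_le_mul_of_nonneg_left htri hcU.le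
      have f2 := mul_le_mul_of_nonneg_left hd2 hcU.le
      have f3 := mul_le_mul_of_nonneg_left (hℓ2.trans hδY) hCntpos.le
      have f4 := mul_le_mul_of_nonneg_right hcCnt (dist_nonneg (x := x) (y := Y))
      nlinarith [f1, f2, f3, f4]
    have hfar : infDist x (E \ Qj j) ≤ dist x y := Metric.infDist_le_dist_of_mem hy
    have h6 : 2 * Cnt * dist x Y < 2 * Cnt * (infDist x (E \ Qj j) / K₁) :=
      mul_lt_mul_of_pos_left hYd (by linarith)
    have h7 : 2 * Cnt * (infDist x (E \ Qj j) / K₁) = cU * infDist x (E \ Qj j) := by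
      rw [hK₁]
      field_simp
    rw [h7] at h6
    linarith [hxy, h6, mul_le_mul_of_nonneg_left hfar hcU.le]
  -- eventuality 2 : no tent over a cube avoiding x eventually contains Y
  have hev2 : ∀ᶠ Y in nhdsWithin x (Γ x), ∀ j, Y ∈ t (Qj j) → x ∈ Qj j := by
    have hevF : ∀ᶠ Y in nhdsWithin x (Γ x), ∀ j ∈ F4,
        (x ∉ Qj j → K₂ * dist x Y < infDist x (Qj j)) := by
      rw [Filter.eventually_all_finset]
      intro j _
      by_cases hxQ : x ∈ Qj j
      · exact Filter.Eventually.of_forall (fun Y h => absurd hxQ h)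
      · have hr : 0 < infDist x (Qj j) := hx2 j hx0 hxQ
        filter_upwards [hev_dist (infDist x (Qj j) / (K₂ + 1))
          (div_pos hr (by linarith))] with Y hYd _
        have h8 : dist x Y * (K₂ + 1) < infDist x (Qj j) :=
          (lt_div_iff₀ (by linarith)).1 hYd
        nlinarith [dist_nonneg (x := x) (y := Y)]
    filter_upwards [hevF, hev_dist ε₁ hε₁pos, hev_mem] with Y hYF hYε hYΓ
    intro j hYt
    by_contra hxQ
    have hYΩ : Y ∈ Ω := hΓΩ hYΓ
    have hεpos : 0 < dist x Y := by
      rw [dist_pos]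
      intro hEq
      exact hxΩ (hEq ▸ hYΩ)
    rw [hΓ x] at hYΓ
    rcases mem_iUnion₂.1 hYΓ with ⟨Q', hQ', hYU'⟩
    have hYT : Y ∈ T (Qj j) := ht1 (Qj j) (hQj j).1 (hQj j).2 hYt
    rw [hT (Qj j)] at hYT
    rcases mem_iUnion₂.1 hYT with ⟨Q'', hQ'', hYU''⟩
    have hδY : infDist Y E ≤ dist x Y := by
      rw [dist_comm]; exact Metric.infDist_le_dist_of_mem hx0
    have hd1 : dist x Y ≤ Cnt * ℓ Q' := hstar Q' hQ'.1 x hQ'.2 Y hYU'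
    have hℓ1 : cU * ℓ Q' ≤ infDist Y E := (hδcomp Q' hQ'.1 Y hYU').1
    have hup2 : infDist Y E ≤ CU * ℓ Q'' := (hδcomp Q'' hQ''.1 Y hYU'').2.1
    have hinfY : infDist Y (Qj j) ≤ CU * ℓ Q'' :=
      (Metric.infDist_le_infDist_of_subset hQ''.2 (D.nonempty Q'' hQ''.1)).trans
        (hδcomp Q'' hQ''.1 Y hYU'').2.2
    have hℓ'' : c₃ * dist x Y ≤ ℓ Q'' := by
      rw [hc₃, div_mul_eq_mul_div, div_le_iff₀ (mul_pos hCU hCntpos)]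
      nlinarith [mul_le_mul_of_nonneg_left hd1 hcU.le,
        mul_le_mul_of_nonneg_left (hℓ1.trans hup2) hCntpos.le]
    have hL := hL4 (dist x Y) hεpos (le_of_lt hYε) (Qj j) (hQj j).1 Q'' hQ''.1 hQ''.2 hℓ''
    have hinfx : infDist x (Qj j) ≤ K₂ * dist x Y := by
      have h1 : infDist x (Qj j) ≤ infDist Y (Qj j) + dist x Y :=
        Metric.infDist_le_infDist_add_dist
      have h2 : cU * ℓ Q'' ≤ infDist Y E := (hδcomp Q'' hQ''.1 Y hYU'').1
      have h3 := mul_le_mul_of_nonneg_left (h2.trans hδY) hCU.le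
      have h4 : CU * ℓ Q'' ≤ CU / cU * dist x Y := by
        rw [div_mul_eq_mul_div, le_div_iff₀ hcU]
        nlinarith [h3]
      rw [hK₂, add_mul, one_mul]
      linarith [h1, hinfY.trans h4]
    have hxA : x ∈ A j := by
      refine ⟨hx0, ?_⟩
      have h9 : M * (c₄ * dist x Y) ≤ M * ℓ (Qj j) := mul_le_mul_of_nonneg_left hL hMpos.le
      have h10 : M * (c₄ * dist x Y) = K₂ * dist x Y := by
        rw [← mul_assoc, hM, div_mul_cancel₀ _ hc₄pos.ne']
      rw [← h10] at hinfx
      exact hinfx.trans h9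
    have hjF : j ∈ F4 := (hF4mem j).2 hxA
    have h11 := hYF j hjF hxQ
    linarith [hinfx]
  -- conclusion
  have hfinal : ∀ᶠ Y in nhdsWithin x (Γ x), F₀ Y = f x := by
    filter_upwards [hev1, hev2] with Y h1 h2
    have hmem : ∀ j, Y ∈ t (Qj j) ↔ j ∈ J := by
      intro j
      constructor
      · intro hYt
        exact (hJmem j).2 (h2 j hYt)
      · intro hj
        exact h1 j hj
    rw [hF₀ Y, hf x, aux_tsum_indicator α (fun j => t (Qj j)) Y J hmem,
      aux_tsum_indicator α Qj x J (fun j => (hJmem j).symm)]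
  exact Filter.Tendsto.congr' (hfinal.mono fun Y hY => hY.symm) tendsto_const_nhds
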